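/- Let F : K → ℝ be convex on a closed convex set K ⊆ ℝ^d with stochastic subgradients bounded by G. Fix w₁ ∈ K and β > 0, and consider iterates w_{t+1} = Π_K[w_t - η_t(g_t + (1/β)(w_t - w₁))] where ‖g_t‖ ≤ G and η_t = 2β/t. Then for every t ≥ 1, ‖w_t - w₁‖ ≤ 2βG. -/

import Mathlib

theorem stmt_3 (d : ℕ) (K : Set (EuclideanSpace ℝ (Fin d)))
    (hK : Convex ℝ K) (hKc : IsClosed K)
    (β G : ℝ) (hβ : 0 < β) (hG : 0 ≤ G)
    (w₁ : EuclideanSpace ℝ (Fin d)) (hw₁ : w₁ ∈ K)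
    (g w : ℕ → EuclideanSpace ℝ (Fin d))
    (hg : ∀ t, ‖g t‖ ≤ G)
    (hw1 : w 1 = w₁)
    (hupdate : ∀ t, 1 ≤ t →
      w (t+1) ∈ K ∧
      ∀ u ∈ K, ‖w (t+1) - u‖ ≤
        ‖(w t - (2*β/(t:ℝ)) • (g t + (1/β) • (w t - w₁))) - u‖) :
    ∀ t, 1 ≤ t → ‖w t - w₁‖ ≤ 2 * β * G := by
  intro t ht
  induction t with
  | zero => omega
  | succ n ih =>
    rcases Nat.lt_or_ge n 1 with h1 | hn
    · have : n = 0 := by omega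
      subst this
      simpa [hw1] using mul_nonneg (by linarith : (0:ℝ) ≤ 2*β) hG
    · have ihb := ih hn
      have h2 := (hupdate n hn).2 w₁ hw₁
      set c : ℝ := 2*β/(n:ℝ) with hc
      have hnpos : (0:ℝ) < n := by exact_mod_cast hn
      have hβne : (β:ℝ) ≠ 0 := ne_of_gt hβ
      have hrw : (w n - c • (g n + (1/β) • (w n - w₁))) - w₁
          = (1 - c/β) • (w n - w₁) - c • g n := by
        rw [div_eq_mul_inv c β]
        module
      have hnorm : ‖(1 - c/β) • (w n - w₁) - c • g n‖
          ≤ |1 - c/β| * ‖w n - w₁‖ + |c| * ‖g n‖ := by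
        calc ‖(1 - c/β) • (w n - w₁) - c • g n‖
            ≤ ‖(1 - c/β) • (w n - w₁)‖ + ‖c • g n‖ := norm_sub_le _ _
          _ = |1 - c/β| * ‖w n - w₁‖ + |c| * ‖g n‖ := by
              rw [norm_smul, norm_smul, Real.norm_eq_abs, Real.norm_eq_abs]
      have hcpos : 0 < c := by positivity
      have hcabs : |c| = c := abs_of_pos hcpos
      have hcβ : c / β = 2 / n := by
        field_simp [hc]
        rw [hc, div_mul_cancel₀ _ hnpos.ne']; ring
      rcases Nat.lt_or_ge n 2 with h2' | hn2
      · -- n = 1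
        have hn1 : n = 1 := by omega
        subst hn1
        have : ‖w 1 - w₁‖ = 0 := by simp [hw1]
        have hcv : c = 2*β := by simp [hc]
        have hb : |1 - c/β| * ‖w 1 - w₁‖ + |c| * ‖g 1‖ ≤ 2 * β * G := by
          rw [this, hcabs, hcv]
          have := hg 1
          nlinarith [norm_nonneg (g 1)]
        calc ‖w (1+1) - w₁‖ ≤ _ := h2
          _ = ‖(1 - c/β) • (w 1 - w₁) - c • g 1‖ := by rw [hrw]
          _ ≤ |1 - c/β| * ‖w 1 - w₁‖ + |c| * ‖g 1‖ := hnorm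
          _ ≤ 2 * β * G := hb
      · have hn2' : (2:ℝ) ≤ n := by exact_mod_cast hn2
        have hfac : |1 - c/β| = 1 - 2/(n:ℝ) := by
          rw [hcβ]
          apply abs_of_nonneg
          rw [sub_nonneg]
          rw [div_le_one hnpos]
          exact hn2'
        have hb : |1 - c/β| * ‖w n - w₁‖ + |c| * ‖g n‖ ≤ 2 * β * G := by
          rw [hfac, hcabs, hc]
          have hgn := hg n
          have h1 : (1 - 2/(n:ℝ)) * ‖w n - w₁‖ ≤ (1 - 2/(n:ℝ)) * (2*β*G) := by
            apply mul_le_mul_of_nonneg_left ihb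
            rw [sub_nonneg, div_le_one hnpos]; exact hn2'
          have h2 : (2*β/(n:ℝ)) * ‖g n‖ ≤ (2*β/(n:ℝ)) * G :=
            mul_le_mul_of_nonneg_left hgn (by positivity)
          have h3 : (1 - 2/(n:ℝ)) * (2*β*G) + (2*β/(n:ℝ)) * G ≤ 2*β*G := by
            have : 0 ≤ 2*β*G/(n:ℝ) := by positivity
            field_simp
            nlinarith
          linarith
        calc ‖w (n+1) - w₁‖ ≤ _ := h2
          _ = ‖(1 - c/β) • (w n - w₁) - c • g n‖ := by rw [hrw]
          _ ≤ |1 - c/β| * ‖w n - w₁‖ + |c| * ‖g n‖ := hnorm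
          _ ≤ 2 * β * G := hb
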